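/- The map D₄(ε,δ,η) = (1 - ε - δ/(1-η), ε, δ/(ε+δ)) has order 4 wherever defined, and its unique fixed point is (1/4, 1/4, 1/2), corresponding to the regular polytope {3,3,4}. -/

import Mathlib

noncomputable def refD4 : ℝ × ℝ × ℝ → ℝ × ℝ × ℝ :=
  fun p => (1 - p.1 - p.2.1 / (1 - p.2.2), p.1, p.2.1 / (p.1 + p.2.1))

theorem refD4_order_four_and_unique_fixed_point :
    (∀ ε δ η : ℝ,
      (∀ k < 4, (refD4^[k] (ε, δ, η)).2.2 ≠ 1 ∧
        (refD4^[k] (ε, δ, η)).1 + (refD4^[k] (ε, δ, η)).2.1 ≠ 0) →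
      refD4^[4] (ε, δ, η) = (ε, δ, η)) ∧
    (∀ ε δ η : ℝ, η ≠ 1 → ε + δ ≠ 0 →
      (refD4 (ε, δ, η) = (ε, δ, η) ↔ (ε, δ, η) = ((1:ℝ)/4, (1:ℝ)/4, (1:ℝ)/2))) := by
  constructor
  · intro ε δ η H
    have H0 := H 0 (by norm_num)
    have H1 := H 1 (by norm_num)
    have H2 := H 2 (by norm_num)
    have H3 := H 3 (by norm_num)
    simp only [Function.iterate_succ, Function.iterate_zero, Function.comp_apply, id_eq] at H0 H1 H2 H3
    have hη : (1:ℝ) - η ≠ 0 := sub_ne_zero.mpr (Ne.symm H0.1)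
    have hs : ε + δ ≠ 0 := H0.2
    have e1 : refD4 (ε, δ, η) = (1 - ε - δ/(1-η), ε, δ/(ε+δ)) := rfl
    rw [e1] at H1 H2 H3
    have hε : ε ≠ 0 := by
      intro h
      apply H1.1
      dsimp only
      rw [h, zero_add]
      exact div_self (by simpa [h] using hs)
    have hA : 1 - η - δ ≠ 0 := by
      intro h
      apply H1.2
      dsimp only
      rw [show δ = 1 - η by linarith, div_self hη]
      ring
    have e2 : refD4 (1 - ε - δ/(1-η), ε, δ/(ε+δ)) =
        (δ*η/(1-η), 1 - ε - δ/(1-η), ε*(1-η)/(1-η-δ)) := by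
      have r0 : 1 - δ/(ε+δ) = ε/(ε+δ) := by field_simp; ring
      have r1 : 1 - ε - δ/(1-η) + ε = (1-η-δ)/(1-η) := by field_simp [hη]; ring
      simp only [refD4, Prod.mk.injEq]
      rw [r0, r1, div_div_eq_mul_div, div_div_eq_mul_div]
      refine ⟨?_, trivial, ?_⟩
      · field_simp [hη, hs, hε]
        ring
      · field_simp [hη, hs, hε, hA]
    rw [e2] at H2 H3
    have hC : (1-ε)*(1-η) - δ ≠ 0 := by
      intro h
      apply H2.1
      dsimp only
      rw [show ε*(1-η) = 1 - η - δ by linear_combination -h, div_self hA]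
    have hB : 1 - ε - δ ≠ 0 := by
      intro h
      apply H2.2
      dsimp only
      field_simp [hη]
      linear_combination (1-η)*h
    have e3 : refD4 (δ*η/(1-η), 1 - ε - δ/(1-η), ε*(1-η)/(1-η-δ)) =
        (δ, δ*η/(1-η), ((1-ε)*(1-η)-δ)/((1-ε-δ)*(1-η))) := by
      have r2 : δ*η/(1-η) + (1 - ε - δ/(1-η)) = 1-ε-δ := by field_simp [hη]; ring
      have r3 : 1 - ε*(1-η)/(1-η-δ) = ((1-ε)*(1-η)-δ)/(1-η-δ) := by
        field_simp [hA]; ring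
      simp only [refD4, Prod.mk.injEq]
      rw [r2, r3, div_div_eq_mul_div]
      refine ⟨?_, trivial, ?_⟩
      · field_simp [hη, hC, show (1-η)*(1-ε)-δ ≠ 0 by rwa [mul_comm] at hC]
        ring
      · field_simp [hη, hB]
    rw [e3] at H3
    have hδ : δ ≠ 0 := by
      intro h
      apply H3.2
      dsimp only
      rw [h]
      ring_nf
    have hη0 : η ≠ 0 := by
      intro h
      apply H3.1
      dsimp only
      rw [h]
      rw [show ((1:ℝ)-ε)*(1-0)-δ = (1-ε-δ)*(1-0) by ring]
      exact div_self (by simpa using hB)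
    have e4 : refD4 (δ, δ*η/(1-η), ((1-ε)*(1-η)-δ)/((1-ε-δ)*(1-η))) = (ε, δ, η) := by
      have r4 : 1 - ((1-ε)*(1-η)-δ)/((1-ε-δ)*(1-η)) = δ*η/((1-ε-δ)*(1-η)) := by
        field_simp [hB, hη]; ring
      have r5 : δ + δ*η/(1-η) = δ/(1-η) := by field_simp [hη]; ring
      simp only [refD4, Prod.mk.injEq]
      rw [r4, r5, div_div_eq_mul_div, div_div_eq_mul_div]
      refine ⟨?_, trivial, ?_⟩
      · field_simp [hη, hδ, hη0, hB]
        ring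
      · field_simp [hη, hδ]
    show refD4 (refD4 (refD4 (refD4 (ε, δ, η)))) = (ε, δ, η)
    rw [e1, e2, e3, e4]
  · intro ε δ η hη1 hs
    have hη : (1:ℝ) - η ≠ 0 := sub_ne_zero.mpr (Ne.symm hη1)
    constructor
    · intro h
      rw [refD4, Prod.mk.injEq, Prod.mk.injEq] at h
      obtain ⟨h1, h2, h3⟩ := h
      dsimp only at h1 h2 h3
      have hδε : δ = ε := h2.symm
      subst hδε
      have hε : δ ≠ 0 := by intro h; apply hs; rw [h]; ring
      field_simp at h3
      have hη2 : η = 1/2 := by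
        have h4 : (2*η)*δ = 1*δ := by linear_combination -δ*h3
        have := mul_right_cancel₀ hε h4
        linarith
      subst hη2
      have : δ = 1/4 := by
        field_simp at h1
        linarith
      subst this
      norm_num
    · intro h
      rw [Prod.mk.injEq, Prod.mk.injEq] at h
      obtain ⟨h1, h2, h3⟩ := h
      subst h1; subst h2; subst h3
      simp only [refD4, Prod.mk.injEq]
      norm_num
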